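/- Let Z : [0,T] → ℝ be ζ-Hölder continuous with Z(0) = 0 and Hölder constant c, for some ζ ∈ (0,1). For θ ≥ 0 define Y_t(θ) = e^{-θt} Z(t) + θ ∫_0^t e^{-θ(t-s)} (Z(t) - Z(s)) ds. Then for all t ∈ [0,T] and θ ≥ 0, |Y_t(θ)| ≤ c ζ ∫_0^t e^{-θu} u^{ζ-1} du, and in particular sup_{t ≤ T} |Y_t(θ)| ≤ c ζ ∫_0^T e^{-θu} u^{ζ-1} du. -/

import Mathlib

open MeasureTheory intervalIntegral

private lemma aux_integrable_rpow_exp (θ r a b : ℝ) (hr : -1 < r) :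
    IntervalIntegrable (fun u => Real.exp (-(θ * u)) * u ^ r) volume a b :=
  (intervalIntegral.intervalIntegrable_rpow' hr).continuousOn_mul (by fun_prop)

private lemma aux_ibp (θ t ζ : ℝ) (ht : 0 ≤ t) (hζ0 : 0 < ζ) (hζ1 : ζ < 1) :
    Real.exp (-(θ * t)) * t ^ ζ + θ * ∫ u in (0:ℝ)..t, Real.exp (-(θ * u)) * u ^ ζ
      = ζ * ∫ u in (0:ℝ)..t, Real.exp (-(θ * u)) * u ^ (ζ - 1) := by
  set f : ℝ → ℝ := fun u => Real.exp (-(θ * u)) * u ^ ζ with hf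
  set F' : ℝ → ℝ := fun u =>
    ζ * (Real.exp (-(θ * u)) * u ^ (ζ - 1)) - θ * (Real.exp (-(θ * u)) * u ^ ζ) with hF'
  have h1 : IntervalIntegrable (fun u => Real.exp (-(θ * u)) * u ^ (ζ - 1)) volume 0 t :=
    aux_integrable_rpow_exp θ (ζ - 1) 0 t (by linarith)
  have h2 : IntervalIntegrable (fun u => Real.exp (-(θ * u)) * u ^ ζ) volume 0 t :=
    aux_integrable_rpow_exp θ ζ 0 t (by linarith)
  have hFi : IntervalIntegrable F' volume 0 t := (h1.const_mul ζ).sub (h2.const_mul θ)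
  have hcont : ContinuousOn f (Set.Icc 0 t) :=
    (((by fun_prop : Continuous fun u : ℝ => Real.exp (-(θ * u))).mul
      (Real.continuous_rpow_const hζ0.le))).continuousOn
  have hderiv : ∀ x ∈ Set.Ioo (0:ℝ) t, HasDerivWithinAt f (F' x) (Set.Ioi x) x := by
    intro x hx
    have d1 : HasDerivAt (fun u : ℝ => Real.exp (-(θ * u))) (-θ * Real.exp (-(θ * x))) x := by
      have h0 : HasDerivAt (fun u : ℝ => -(θ * u)) (-θ) x := by
        simpa using ((hasDerivAt_id x).const_mul (-θ))
      simpa [mul_comm] using h0.exp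
    have d2 : HasDerivAt (fun u : ℝ => u ^ ζ) (ζ * x ^ (ζ - 1)) x :=
      Real.hasDerivAt_rpow_const (Or.inl (ne_of_gt hx.1))
    have hmul := d1.mul d2
    have heq : -θ * Real.exp (-(θ * x)) * x ^ ζ + Real.exp (-(θ * x)) * (ζ * x ^ (ζ - 1))
        = F' x := by simp only [hF']; ring
    exact (heq ▸ hmul).hasDerivWithinAt
  have key : ∫ u in (0:ℝ)..t, F' u = f t - f 0 :=
    integral_eq_sub_of_hasDeriv_right_of_le ht hcont hderiv hFi
  have hsplit : ∫ u in (0:ℝ)..t, F' u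
      = ζ * (∫ u in (0:ℝ)..t, Real.exp (-(θ * u)) * u ^ (ζ - 1))
        - θ * (∫ u in (0:ℝ)..t, Real.exp (-(θ * u)) * u ^ ζ) := by
    simp only [hF']
    rw [intervalIntegral.integral_sub (h1.const_mul ζ) (h2.const_mul θ),
      intervalIntegral.integral_const_mul, intervalIntegral.integral_const_mul]
  have hf0 : f 0 = 0 := by simp [hf, Real.zero_rpow hζ0.ne']
  rw [hsplit, hf0] at key
  simp only [hf] at key ⊢
  linarith

/-- Pathwise estimate for the Markovian lift of a Hölder-continuous driver: if `Z` is
`ζ`-Hölder on `[0,T]` with constant `c` and `Z 0 = 0`, then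
`Y_t(θ) = e^{-θt}Z(t) + θ∫_0^t e^{-θ(t-s)}(Z(t)-Z(s)) ds` satisfies
`|Y_t(θ)| ≤ cζ ∫_0^t e^{-θu} u^{ζ-1} du ≤ cζ ∫_0^T e^{-θu} u^{ζ-1} du`. -/
theorem stmt_7 (T c ζ : ℝ) (hT : 0 ≤ T) (hζ : ζ ∈ Set.Ioo (0 : ℝ) 1)
    (Z : ℝ → ℝ) (hZ0 : Z 0 = 0)
    (hhold : ∀ s ∈ Set.Icc (0 : ℝ) T, ∀ t ∈ Set.Icc (0 : ℝ) T,
      |Z t - Z s| ≤ c * |t - s| ^ ζ) :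
    ∀ t ∈ Set.Icc (0 : ℝ) T, ∀ θ : ℝ, 0 ≤ θ →
      (|Real.exp (-(θ * t)) * Z t
          + θ * ∫ s in (0 : ℝ)..t, Real.exp (-(θ * (t - s))) * (Z t - Z s)|
        ≤ c * ζ * ∫ u in (0 : ℝ)..t, Real.exp (-(θ * u)) * u ^ (ζ - 1)) ∧
      (|Real.exp (-(θ * t)) * Z t
          + θ * ∫ s in (0 : ℝ)..t, Real.exp (-(θ * (t - s))) * (Z t - Z s)|
        ≤ c * ζ * ∫ u in (0 : ℝ)..T, Real.exp (-(θ * u)) * u ^ (ζ - 1)) := by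
  obtain ⟨hζ0, hζ1⟩ := hζ
  intro t ht θ hθ
  rcases eq_or_lt_of_le hT with hT0 | hT0
  · have ht0 : t = 0 := le_antisymm (hT0 ▸ ht.2) ht.1
    subst ht0
    simp [hZ0, ← hT0]
  have hTζ : (0:ℝ) < T ^ ζ := Real.rpow_pos_of_pos hT0 ζ
  have hc : 0 ≤ c := by
    have h := hhold 0 ⟨le_rfl, hT⟩ T ⟨hT, le_rfl⟩
    rw [hZ0, sub_zero, sub_zero, abs_of_nonneg hT] at h
    nlinarith [abs_nonneg (Z T)]
  have ht0 : 0 ≤ t := ht.1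
  -- continuity of Z on [0,T]
  have hZcont : ContinuousOn Z (Set.Icc 0 T) := by
    intro x hx
    rw [Metric.continuousWithinAt_iff]
    intro ε hε
    rcases eq_or_lt_of_le hc with hc0 | hc0
    · refine ⟨1, one_pos, fun y hy _ => ?_⟩
      have h := hhold x hx y hy
      rw [← hc0, zero_mul] at h
      have hZeq : |Z y - Z x| = 0 := le_antisymm h (abs_nonneg _)
      simpa [Real.dist_eq, hZeq] using hε
    · refine ⟨(ε / (2 * c)) ^ ζ⁻¹, Real.rpow_pos_of_pos (by positivity) _, fun y hy hd => ?_⟩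
      rw [Real.dist_eq] at hd ⊢
      have hεc : (0:ℝ) ≤ ε / (2 * c) := by positivity
      calc |Z y - Z x| ≤ c * |y - x| ^ ζ := hhold x hx y hy
        _ < c * (ε / (2 * c)) := by
            have hlt : |y - x| ^ ζ < ((ε / (2 * c)) ^ ζ⁻¹) ^ ζ :=
              Real.rpow_lt_rpow (abs_nonneg _) hd hζ0
            rw [Real.rpow_inv_rpow hεc hζ0.ne'] at hlt
            exact mul_lt_mul_of_pos_left hlt hc0
        _ < ε := by
            have hce : c * (ε / (2 * c)) = ε / 2 := by
              field_simp
            linarith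
  -- integrability facts
  have hexp : Continuous fun s : ℝ => Real.exp (-(θ * (t - s))) := by fun_prop
  have hZic : ContinuousOn (fun s => Real.exp (-(θ * (t - s))) * (Z t - Z s))
      (Set.uIcc 0 t) := by
    rw [Set.uIcc_of_le ht0]
    exact hexp.continuousOn.mul
      (continuousOn_const.sub (hZcont.mono (Set.Icc_subset_Icc le_rfl ht.2)))
  have hintZ : IntervalIntegrable (fun s => Real.exp (-(θ * (t - s))) * (Z t - Z s))
      volume 0 t := hZic.intervalIntegrable
  have hbound_cont : Continuous fun s : ℝ => c * (Real.exp (-(θ * (t - s))) * (t - s) ^ ζ) :=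
    continuous_const.mul (hexp.mul
      ((Real.continuous_rpow_const hζ0.le).comp (continuous_const.sub continuous_id)))
  have hintB : IntervalIntegrable (fun s => c * (Real.exp (-(θ * (t - s))) * (t - s) ^ ζ))
      volume 0 t := hbound_cont.intervalIntegrable 0 t
  -- pointwise bound
  have hptw : ∀ s ∈ Set.Icc (0:ℝ) t,
      |Real.exp (-(θ * (t - s))) * (Z t - Z s)|
        ≤ c * (Real.exp (-(θ * (t - s))) * (t - s) ^ ζ) := by
    intro s hs
    have hsT : s ∈ Set.Icc (0:ℝ) T := ⟨hs.1, hs.2.trans ht.2⟩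
    have h := hhold s hsT t ht
    rw [abs_of_nonneg (sub_nonneg.2 hs.2)] at h
    rw [abs_mul, abs_of_pos (Real.exp_pos _)]
    calc Real.exp (-(θ * (t - s))) * |Z t - Z s|
        ≤ Real.exp (-(θ * (t - s))) * (c * (t - s) ^ ζ) :=
          mul_le_mul_of_nonneg_left h (Real.exp_pos _).le
      _ = c * (Real.exp (-(θ * (t - s))) * (t - s) ^ ζ) := by ring
  -- bound on the integral
  have hB : |∫ s in (0:ℝ)..t, Real.exp (-(θ * (t - s))) * (Z t - Z s)|
      ≤ c * ∫ u in (0:ℝ)..t, Real.exp (-(θ * u)) * u ^ ζ := by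
    calc |∫ s in (0:ℝ)..t, Real.exp (-(θ * (t - s))) * (Z t - Z s)|
        ≤ ∫ s in (0:ℝ)..t, |Real.exp (-(θ * (t - s))) * (Z t - Z s)| :=
          intervalIntegral.abs_integral_le_integral_abs ht0
      _ ≤ ∫ s in (0:ℝ)..t, c * (Real.exp (-(θ * (t - s))) * (t - s) ^ ζ) :=
          intervalIntegral.integral_mono_on ht0 hintZ.abs hintB hptw
      _ = c * ∫ s in (0:ℝ)..t, Real.exp (-(θ * (t - s))) * (t - s) ^ ζ :=
          intervalIntegral.integral_const_mul _ _
      _ = c * ∫ u in (0:ℝ)..t, Real.exp (-(θ * u)) * u ^ ζ := by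
          rw [intervalIntegral.integral_comp_sub_left
            (fun u => Real.exp (-(θ * u)) * u ^ ζ) t]
          norm_num
  -- bound on the boundary term
  have hA : |Real.exp (-(θ * t)) * Z t| ≤ c * (Real.exp (-(θ * t)) * t ^ ζ) := by
    have h := hhold 0 ⟨le_rfl, hT⟩ t ht
    rw [hZ0, sub_zero, sub_zero, abs_of_nonneg ht0] at h
    rw [abs_mul, abs_of_pos (Real.exp_pos _)]
    calc Real.exp (-(θ * t)) * |Z t| ≤ Real.exp (-(θ * t)) * (c * t ^ ζ) :=
        mul_le_mul_of_nonneg_left h (Real.exp_pos _).le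
      _ = c * (Real.exp (-(θ * t)) * t ^ ζ) := by ring
  have hibp := aux_ibp θ t ζ ht0 hζ0 hζ1
  have hfirst : |Real.exp (-(θ * t)) * Z t
      + θ * ∫ s in (0 : ℝ)..t, Real.exp (-(θ * (t - s))) * (Z t - Z s)|
      ≤ c * ζ * ∫ u in (0 : ℝ)..t, Real.exp (-(θ * u)) * u ^ (ζ - 1) := by
    have htri := abs_add_le (Real.exp (-(θ * t)) * Z t)
      (θ * ∫ s in (0 : ℝ)..t, Real.exp (-(θ * (t - s))) * (Z t - Z s))
    have hθB : |θ * ∫ s in (0:ℝ)..t, Real.exp (-(θ * (t - s))) * (Z t - Z s)|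
        ≤ θ * (c * ∫ u in (0:ℝ)..t, Real.exp (-(θ * u)) * u ^ ζ) := by
      rw [abs_mul, abs_of_nonneg hθ]
      exact mul_le_mul_of_nonneg_left hB hθ
    nlinarith [htri, hA, hθB, hibp]
  refine ⟨hfirst, hfirst.trans ?_⟩
  have hmono : (∫ u in (0:ℝ)..t, Real.exp (-(θ * u)) * u ^ (ζ - 1))
      ≤ ∫ u in (0:ℝ)..T, Real.exp (-(θ * u)) * u ^ (ζ - 1) := by
    apply intervalIntegral.integral_mono_interval le_rfl ht0 ht.2
    · filter_upwards [ae_restrict_mem measurableSet_Ioc] with u hu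
      have : (0:ℝ) < u := hu.1
      positivity
    · exact aux_integrable_rpow_exp θ (ζ - 1) 0 T (by linarith)
  exact mul_le_mul_of_nonneg_left hmono (by positivity)
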